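/- arXiv:1703.04892 — 3 statements merged into one kernel-verified Lean document; each statement's English description precedes it below -/
import Mathlib

section
/- Whitney decomposition of the positive quadrant off the diagonal: With the sibling relation τ_k^j ∼ τ_ℓ^j defined by ℓ−k ∈ {−2,2,3} if k is even and ℓ−k ∈ {−3,−2,2} if k is odd, one has the set identity ([0,∞)×[0,∞)) \ {(ξ,ξ) : ξ ≥ 0} = ⋃_{j∈ℤ} ⋃_{k,ℓ ∈ ℤ_{≥0}, τ_ℓ^j ∼ τ_k^j} τ_k^j × τ_ℓ^j. -/
open MeasureTheory Filter Set
open scoped ENNReal NNReal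

noncomputable section

/-- Hölder conjugate exponent in `ℝ≥0∞`. -/
def dualExp (p : ℝ≥0∞) : ℝ≥0∞ := 1 / (1 - 1 / p)

/-- `L^p` norm (with values in `ℝ≥0∞`) of an `ℝ≥0∞`-valued function. -/
def eLp {α : Type*} [MeasurableSpace α] (p : ℝ≥0∞) (μ : Measure α) (g : α → ℝ≥0∞) : ℝ≥0∞ :=
  if p = ∞ then essSup g μ else (∫⁻ a, g a ^ p.toReal ∂μ) ^ (1 / p.toReal)

/-- Fourier transform. -/
def FT (f : ℝ → ℂ) : ℝ → ℂ := FourierTransform.fourier f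

/-- Inverse Fourier transform. -/
def FTinv (f : ℝ → ℂ) : ℝ → ℂ := FourierTransformInv.fourierInv f

/-- The Airy propagator `e^{-t ∂_x^3}`, i.e. the Fourier multiplier with symbol `e^{i t ξ³}`. -/
def airy (t : ℝ) (f : ℝ → ℂ) : ℝ → ℂ :=
  FTinv (fun ξ => Complex.exp (Complex.I * (t : ℂ) * (ξ : ℂ) ^ 3) * FT f ξ)

/-- `|∂_x|^s`, the Fourier multiplier with symbol `|ξ|^s`. -/
def absD (s : ℝ) (f : ℝ → ℂ) : ℝ → ℂ :=
  FTinv (fun ξ => ((|ξ| ^ s : ℝ) : ℂ) * FT f ξ)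

/-- Mixed norm `L^p_x L^q_t (ℝ × I)` of `u = u t x`. -/
def LxLt (p q : ℝ≥0∞) (I : Set ℝ) (u : ℝ → ℝ → ℂ) : ℝ≥0∞ :=
  eLp p volume (fun x => eLp q (volume.restrict I) (fun t => (‖u t x‖₊ : ℝ≥0∞)))

/-- Mixed norm `L^p_t L^q_x (I × ℝ)` of `u = u t x`. -/
def LtLx (p q : ℝ≥0∞) (I : Set ℝ) (u : ℝ → ℝ → ℂ) : ℝ≥0∞ :=
  eLp p (volume.restrict I) (fun t => eLp q volume (fun x => (‖u t x‖₊ : ℝ≥0∞)))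

/-- hat-Lebesgue norm `‖f‖_{L̂^a} = ‖f̂‖_{L^{a'}}`. -/
def hatLp (a : ℝ≥0∞) (f : ℝ → ℂ) : ℝ≥0∞ :=
  eLp (dualExp a) volume (fun ξ => (‖FT f ξ‖₊ : ℝ≥0∞))

/-- The dyadic interval `τ^j_k = [k 2^{-j}, (k+1) 2^{-j})`. -/
def dyadic (j k : ℤ) : Set ℝ := Set.Ico ((k : ℝ) * 2 ^ (-j)) (((k : ℝ) + 1) * 2 ^ (-j))

/-- `ℓ^δ` norm over all pairs `(j,k) ∈ ℤ × ℤ`. -/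
def ld (d : ℝ≥0∞) (g : ℤ × ℤ → ℝ≥0∞) : ℝ≥0∞ :=
  if d = ∞ then ⨆ v, g v else (∑' v, g v ^ d.toReal) ^ (1 / d.toReal)

/-- hat-Morrey norm `‖f‖_{M̂^b_{g,d}}`. -/
def hatMorrey (b g d : ℝ≥0∞) (f : ℝ → ℂ) : ℝ≥0∞ :=
  ld d (fun jk =>
    ENNReal.ofReal (((2 : ℝ) ^ (-jk.1)) ^ ((1 / g).toReal - (1 / b).toReal)) *
      eLp (dualExp g) (volume.restrict (dyadic jk.1 jk.2)) (fun ξ => (‖FT f ξ‖₊ : ℝ≥0∞)))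

/-- Morrey norm `‖f‖_{M^b_{g,d}}`. -/
def morrey (b g d : ℝ≥0∞) (f : ℝ → ℂ) : ℝ≥0∞ :=
  ld d (fun jk =>
    ENNReal.ofReal (((2 : ℝ) ^ (-jk.1)) ^ ((1 / b).toReal - (1 / g).toReal)) *
      eLp g (volume.restrict (dyadic jk.1 jk.2)) (fun x => (‖f x‖₊ : ℝ≥0∞)))

/-- The gKdV nonlinearity `|u|^{2α} u`. -/
def gNL (a : ℝ) (v : ℝ → ℂ) : ℝ → ℂ := fun x => ((‖v x‖ ^ (2 * a) : ℝ) : ℂ) * v x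

/-- `u` satisfies the Duhamel formula for gKdV on `I`. -/
def DuhamelOn (a μ t₀ : ℝ) (u₀ : ℝ → ℂ) (I : Set ℝ) (u : ℝ → ℝ → ℂ) : Prop :=
  ∀ t ∈ I, ∀ x : ℝ,
    u t x = airy (t - t₀) u₀ x
      + (μ : ℂ) * ∫ s in t₀..t, airy (t - s) (deriv (gNL a (u s))) x

/-- The norm `‖u‖_{L(I)}`. -/
def normL (a : ℝ) (I : Set ℝ) (u : ℝ → ℝ → ℂ) : ℝ≥0∞ :=
  LxLt (ENNReal.ofReal (5 * a)) (ENNReal.ofReal (5 * a / 3)) I (fun t => absD (1 / a) (u t))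

/-- The norm `‖u‖_{M(I)}`. -/
def normM (a : ℝ) (I : Set ℝ) (u : ℝ → ℝ → ℂ) : ℝ≥0∞ :=
  LxLt (ENNReal.ofReal (10 * a / 3)) (ENNReal.ofReal (5 * a / 2)) I
    (fun t => absD (1 / (2 * a)) (u t))

/-- The norm `‖u‖_{S(I)}`. -/
def normS (a : ℝ) (I : Set ℝ) (u : ℝ → ℝ → ℂ) : ℝ≥0∞ :=
  LxLt (ENNReal.ofReal (5 * a / 2)) (ENNReal.ofReal (5 * a)) I u

/-- The norm `‖u‖_{N(I)}`. -/
def normN (a : ℝ) (I : Set ℝ) (u : ℝ → ℝ → ℂ) : ℝ≥0∞ :=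
  LxLt (ENNReal.ofReal (1 / (3 / (10 * a) + 4 / 5))) (ENNReal.ofReal (1 / (2 / (5 * a) + 2 / 5)))
    I (fun t => absD (1 / (2 * a)) (u t))

/-- Translation `(T y f)(x) = f (x - y)`. -/
def Tdef (y : ℝ) (f : ℝ → ℂ) : ℝ → ℂ := fun x => f (x - y)

/-- Dilation `(D h f)(x) = h^{1/a} f (h x)`. -/
def Ddef (a h : ℝ) (f : ℝ → ℂ) : ℝ → ℂ := fun x => ((h ^ (1 / a) : ℝ) : ℂ) * f (h * x)

/-- Enlargement of a set in the `τ`-direction. -/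
def enlarge (R : Set (ℝ × ℝ)) (lam : ℝ) : Set (ℝ × ℝ) :=
  {p | ∃ τ' : ℝ, |τ'| ≤ lam ∧ (p.1 - τ', p.2) ∈ R}

/-- The Whitney piece `A_{j,k,ℓ}`. -/
def setA (j k l : ℤ) : Set (ℝ × ℝ) :=
  {p | ((k : ℝ) + l) / 2 ^ j ≤ p.2 ∧ p.2 ≤ ((k : ℝ) + l + 2) / 2 ^ j ∧
    (if l < k then
      (3 / 4) * (((k : ℝ) - l - 1) ^ 2 / 2 ^ (2 * j)) * p.2 ≤ p.1 - p.2 ^ 3 / 4 ∧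
        p.1 - p.2 ^ 3 / 4 ≤ (3 / 4) * (((k : ℝ) - l + 1) ^ 2 / 2 ^ (2 * j)) * p.2
     else
      (3 / 4) * (((k : ℝ) - l + 1) ^ 2 / 2 ^ (2 * j)) * p.2 ≤ p.1 - p.2 ^ 3 / 4 ∧
        p.1 - p.2 ^ 3 / 4 ≤ (3 / 4) * (((k : ℝ) - l - 1) ^ 2 / 2 ^ (2 * j)) * p.2)}

/-- The Whitney piece `B_{j,k,ℓ}`. -/
def setB (j k l : ℤ) : Set (ℝ × ℝ) :=
  {p | ((k : ℝ) - l - 1) / 2 ^ j ≤ p.2 ∧ p.2 ≤ ((k : ℝ) - l + 1) / 2 ^ j ∧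
    (if l < k then
      (3 / 4) * (((k : ℝ) + l) ^ 2 / 2 ^ (2 * j)) * p.2 ≤ p.1 - p.2 ^ 3 / 4 ∧
        p.1 - p.2 ^ 3 / 4 ≤ (3 / 4) * (((k : ℝ) + l + 2) ^ 2 / 2 ^ (2 * j)) * p.2
     else
      (3 / 4) * (((k : ℝ) + l + 2) ^ 2 / 2 ^ (2 * j)) * p.2 ≤ p.1 - p.2 ^ 3 / 4 ∧
        p.1 - p.2 ^ 3 / 4 ≤ (3 / 4) * (((k : ℝ) + l) ^ 2 / 2 ^ (2 * j)) * p.2)}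

/-- The enlarged Whitney piece `Ã_{j,k,ℓ}`. -/
def tildeA (j k l : ℤ) : Set (ℝ × ℝ) := enlarge (setA j k l) ((k : ℝ) / (100 * 2 ^ (3 * j)))

/-- The enlarged Whitney piece `B̃_{j,k,ℓ}`. -/
def tildeB (j k l : ℤ) : Set (ℝ × ℝ) := enlarge (setB j k l) ((k : ℝ) / (100 * 2 ^ (3 * j)))

/-- Space-time Fourier transform `𝓕_{t,x}`, `u = u t x`, output as a function of `(τ, ξ)`. -/
def F2 (u : ℝ → ℝ → ℂ) : ℝ → ℝ → ℂ := fun τ ξ =>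
  ∫ t : ℝ, ∫ x : ℝ,
    Complex.exp (((-2 * Real.pi * (t * τ + x * ξ) : ℝ) : ℂ) * Complex.I) * u t x

/-- Inverse space-time Fourier transform. -/
def F2inv (U : ℝ → ℝ → ℂ) : ℝ → ℝ → ℂ := fun t x =>
  ∫ τ : ℝ, ∫ ξ : ℝ,
    Complex.exp (((2 * Real.pi * (t * τ + x * ξ) : ℝ) : ℂ) * Complex.I) * U τ ξ

/-- The smoothed cut-off `ψ_{R,λ}`. -/
def psiCut (φ : ℝ → ℝ) (R : Set (ℝ × ℝ)) (lam : ℝ) : ℝ → ℝ → ℝ := fun τ ξ =>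
  ∫ s : ℝ, (2 / lam) * φ (2 * s / lam) *
      (enlarge R (lam / 2)).indicator (fun _ => (1 : ℝ)) (τ - s, ξ)

/-- The space-time Fourier multiplier `P_{R,λ}`. -/
def Pmul (φ : ℝ → ℝ) (R : Set (ℝ × ℝ)) (lam : ℝ) (F : ℝ → ℝ → ℂ) : ℝ → ℝ → ℂ :=
  F2inv (fun τ ξ => ((psiCut φ R lam τ ξ : ℝ) : ℂ) * F2 F τ ξ)

/-- The kernel `K(t,x) = ∬_{R_{+λ/2}} e^{i(tτ+xξ)} dτ dξ`. -/
def kernelK (R : Set (ℝ × ℝ)) (lam : ℝ) (t x : ℝ) : ℂ :=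
  ∫ p in enlarge R (lam / 2), Complex.exp (((t * p.1 + x * p.2 : ℝ) : ℂ) * Complex.I)

/-- The index set `Λ`. -/
def Lam : Set (ℤ × ℤ × ℤ) :=
  {v | 0 ≤ v.2.1 ∧ 0 ≤ v.2.2 ∧
    (v.2.2 - v.2.1 = -3 ∨ v.2.2 - v.2.1 = -2 ∨ v.2.2 - v.2.1 = 2 ∨ v.2.2 - v.2.1 = 3)}

/-- The Whitney sibling relation. -/
def sibling (k l : ℤ) : Prop :=
  if Even k then l - k = -2 ∨ l - k = 2 ∨ l - k = 3
  else l - k = -3 ∨ l - k = -2 ∨ l - k = 2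

end

lemma floor_double (t : ℝ) : 2 * ⌊t⌋ ≤ ⌊2 * t⌋ ∧ ⌊2 * t⌋ ≤ 2 * ⌊t⌋ + 1 := by
  constructor
  · exact Int.le_floor.2 (by push_cast; linarith [Int.floor_le t])
  · have h := Int.floor_lt.2 (show (2:ℝ) * t < ((2 * ⌊t⌋ + 2 : ℤ) : ℝ) by
      push_cast; linarith [Int.lt_floor_add_one t])
    omega

lemma whitney_key {u v : ℝ} (hu : 0 ≤ u) (huv : u < v) :
    ∃ j : ℤ, (⌊v * 2 ^ j⌋ - ⌊u * 2 ^ j⌋ = 2) ∨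
      (⌊v * 2 ^ j⌋ - ⌊u * 2 ^ j⌋ = 3 ∧ Even ⌊u * 2 ^ j⌋ ∧ Odd ⌊v * 2 ^ j⌋) := by
  have hv : 0 < v := lt_of_le_of_lt hu huv
  -- the set of scales where the gap is at least 2 is nonempty
  obtain ⟨n, hn⟩ := pow_unbounded_of_one_lt (3 / (v - u)) (one_lt_two (α := ℝ))
  have hne : 2 ≤ ⌊v * 2 ^ (n : ℤ)⌋ - ⌊u * 2 ^ (n : ℤ)⌋ := by
    have h2 : (0:ℝ) < 2 ^ (n : ℤ) := zpow_pos two_pos _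
    rw [div_lt_iff₀ (sub_pos.2 huv)] at hn
    have h3 : 3 ≤ (v - u) * 2 ^ (n : ℤ) := by
      rw [zpow_natCast]; nlinarith
    have hfl := Int.floor_le (u * 2 ^ (n : ℤ))
    have hb : (⌊u * 2 ^ (n : ℤ)⌋ + 2 : ℤ) ≤ ⌊v * 2 ^ (n : ℤ)⌋ :=
      Int.le_floor.2 (by push_cast; nlinarith)
    omega
  -- and bounded below
  obtain ⟨m, hm⟩ := pow_unbounded_of_one_lt v (one_lt_two (α := ℝ))
  have hbdd : ∀ z : ℤ, 2 ≤ ⌊v * 2 ^ z⌋ - ⌊u * 2 ^ z⌋ → -(m : ℤ) ≤ z := by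
    intro z hz
    have h2 : (0:ℝ) < 2 ^ z := zpow_pos two_pos _
    have ha0 : 0 ≤ ⌊u * 2 ^ z⌋ := Int.floor_nonneg.2 (mul_nonneg hu h2.le)
    have hb2 : (2:ℝ) ≤ v * 2 ^ z := by
      have h1 : (2 : ℤ) ≤ ⌊v * 2 ^ z⌋ := by omega
      calc (2:ℝ) = ((2:ℤ):ℝ) := by norm_num
        _ ≤ (⌊v * 2 ^ z⌋ : ℝ) := by exact_mod_cast h1
        _ ≤ v * 2 ^ z := Int.floor_le _
    have hlt : (2:ℝ) ^ (1:ℤ) < 2 ^ ((m : ℤ) + z) := by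
      rw [zpow_add₀ (two_ne_zero), zpow_one, zpow_natCast]
      nlinarith
    have := (zpow_lt_zpow_iff_right₀ (one_lt_two (α := ℝ))).1 hlt
    omega
  obtain ⟨j, hj, hjmin⟩ := Int.exists_least_of_bdd ⟨-(m:ℤ), hbdd⟩ ⟨(n : ℤ), hne⟩
  have hprev : ¬ (2 ≤ ⌊v * 2 ^ (j-1)⌋ - ⌊u * 2 ^ (j-1)⌋) := fun h => by
    have := hjmin _ h; omega
  have hsplit : (2:ℝ) ^ j = 2 ^ (j-1) * 2 := by
    rw [← zpow_add_one₀ (two_ne_zero)]; ring_nf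
  have hu2 : u * 2 ^ j = 2 * (u * 2 ^ (j-1)) := by rw [hsplit]; ring
  have hv2 : v * 2 ^ j = 2 * (v * 2 ^ (j-1)) := by rw [hsplit]; ring
  obtain ⟨ha1, ha2⟩ := floor_double (u * 2 ^ (j-1))
  obtain ⟨hb1, hb2⟩ := floor_double (v * 2 ^ (j-1))
  rw [← hu2] at ha1 ha2
  rw [← hv2] at hb1 hb2
  have hmono : ⌊u * 2 ^ (j-1)⌋ ≤ ⌊v * 2 ^ (j-1)⌋ :=
    Int.floor_le_floor (by nlinarith [zpow_pos (two_pos (α := ℝ)) (j-1)])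
  refine ⟨j, ?_⟩
  by_cases hc : ⌊v * 2 ^ j⌋ - ⌊u * 2 ^ j⌋ = 2
  · exact Or.inl hc
  · refine Or.inr ⟨by omega, ⟨⌊u * 2 ^ (j-1)⌋, by omega⟩, ⟨⌊v * 2 ^ (j-1)⌋, by omega⟩⟩

lemma mem_dyadic_floor (j : ℤ) (x : ℝ) : x ∈ dyadic j ⌊x * 2 ^ j⌋ := by
  have h2 : (0:ℝ) < 2 ^ j := zpow_pos two_pos _
  constructor
  · rw [zpow_neg, ← div_eq_mul_inv, div_le_iff₀ h2]
    exact Int.floor_le _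
  · rw [zpow_neg, ← div_eq_mul_inv, lt_div_iff₀ h2]
    exact Int.lt_floor_add_one _


/-- Whitney decomposition of the positive quadrant off the diagonal. -/
theorem whitney_decomposition :
    (Set.Ici (0 : ℝ) ×ˢ Set.Ici (0 : ℝ)) \ {p : ℝ × ℝ | ∃ ξ : ℝ, 0 ≤ ξ ∧ p = (ξ, ξ)} =
      ⋃ (j : ℤ) (k : ℤ) (l : ℤ) (_ : 0 ≤ k) (_ : 0 ≤ l) (_ : sibling k l),
        dyadic j k ×ˢ dyadic j l := by
  ext ⟨x, y⟩
  simp only [Set.mem_diff, Set.mem_prod, Set.mem_Ici, Set.mem_setOf_eq, Set.mem_iUnion,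
    Prod.mk.injEq]
  constructor
  · rintro ⟨⟨hx, hy⟩, hd⟩
    have hne : x ≠ y := fun h => hd ⟨x, hx, rfl, h.symm⟩
    rcases lt_or_gt_of_ne hne with hlt | hgt
    · obtain ⟨j, hcase⟩ := whitney_key hx hlt
      refine ⟨j, ⌊x * 2 ^ j⌋, ⌊y * 2 ^ j⌋,
        Int.floor_nonneg.2 (mul_nonneg hx (zpow_pos two_pos j).le),
        Int.floor_nonneg.2 (mul_nonneg hy (zpow_pos two_pos j).le),
        ?_, mem_dyadic_floor j x, mem_dyadic_floor j y⟩
      unfold sibling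
      rcases hcase with h2 | ⟨h3, hev, _⟩
      · split_ifs with h
        · exact Or.inr (Or.inl (by omega))
        · exact Or.inr (Or.inr (by omega))
      · obtain ⟨a, ha⟩ := hev
        split_ifs with h
        · exact Or.inr (Or.inr (by omega))
        · exact absurd ⟨a, ha⟩ h
    · obtain ⟨j, hcase⟩ := whitney_key hy hgt
      refine ⟨j, ⌊x * 2 ^ j⌋, ⌊y * 2 ^ j⌋,
        Int.floor_nonneg.2 (mul_nonneg hx (zpow_pos two_pos j).le),
        Int.floor_nonneg.2 (mul_nonneg hy (zpow_pos two_pos j).le),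
        ?_, mem_dyadic_floor j x, mem_dyadic_floor j y⟩
      unfold sibling
      rcases hcase with h2 | ⟨h3, _, hodd⟩
      · split_ifs with h
        · exact Or.inl (by omega)
        · exact Or.inr (Or.inl (by omega))
      · obtain ⟨b, hb⟩ := hodd
        split_ifs with h
        · obtain ⟨a, ha⟩ := h; omega
        · exact Or.inl (by omega)
  · rintro ⟨j, k, l, hk, hl, hs, ⟨hx1, hx2⟩, ⟨hy1, hy2⟩⟩
    have h2 : (0:ℝ) < 2 ^ (-j) := zpow_pos two_pos _
    have hk0 : (0:ℝ) ≤ (k:ℝ) := by exact_mod_cast hk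
    have hl0 : (0:ℝ) ≤ (l:ℝ) := by exact_mod_cast hl
    refine ⟨⟨le_trans (mul_nonneg hk0 h2.le) hx1, le_trans (mul_nonneg hl0 h2.le) hy1⟩, ?_⟩
    rintro ⟨ξ, hξ, hxe, hye⟩
    have hxy : x = y := by rw [hxe, hye]
    have hdisj : l - k = -3 ∨ l - k = -2 ∨ l - k = 2 ∨ l - k = 3 := by
      unfold sibling at hs; split_ifs at hs <;> tauto
    have hcase : k + 2 ≤ l ∨ l + 2 ≤ k := by omega
    rcases hcase with hc | hc
    · have hcast : (k:ℝ) + 1 ≤ (l:ℝ) := by exact_mod_cast (by omega : k + 1 ≤ l)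
      have : ((k:ℝ) + 1) * 2 ^ (-j) ≤ (l:ℝ) * 2 ^ (-j) :=
        mul_le_mul_of_nonneg_right hcast h2.le
      linarith
    · have hcast : (l:ℝ) + 1 ≤ (k:ℝ) := by exact_mod_cast (by omega : l + 1 ≤ k)
      have : ((l:ℝ) + 1) * 2 ^ (-j) ≤ (k:ℝ) * 2 ^ (-j) :=
        mul_le_mul_of_nonneg_right hcast h2.le
      linarith
end

section
/- Almost orthogonality of the enlarged Whitney pieces: Let Λ := {(j,k,ℓ) ∈ ℤ×ℤ_{≥0}×ℤ_{≥0} : ℓ−k ∈ {−3,−2,2,3}}. Then for almost every (τ,ξ) ∈ ℝ², ∑_{(j,k,ℓ)∈Λ} 1_{Ã_{j,k,ℓ}}(τ,ξ) ≤ 12, and likewise ∑_{(j,k,ℓ)∈Λ} 1_{B̃_{j,k,ℓ}}(τ,ξ) ≤ 12. -/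
open MeasureTheory Filter Set
open scoped ENNReal NNReal

-- ===== auxiliary definitions and lemmas for the proof =====

noncomputable section

/-- Candidate base scale for the `A`-pieces. -/
def cA (p : ℝ × ℝ) : ℤ := (Int.log 2 (p.2 / (p.1 - p.2 ^ 3 / 4)) + 1) / 2

/-- Candidate map for the `A`-pieces. -/
def gA (p : ℝ × ℝ) (t : ℤ × ℤ × ℤ) : ℤ × ℤ × ℤ :=
  let j := cA p + t.1
  let s := ⌊(2:ℝ) ^ j * p.2⌋ - t.2.1
  let e := 2 + s % 2
  let l := (s + (if t.2.2 = 0 then e else -e)) / 2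
  (j, s - l, l)

/-- Candidate base scale for the `B`-pieces. -/
def cB (p : ℝ × ℝ) : ℤ := -Int.log 2 |p.2|

/-- Auxiliary square-root quantity for the `B`-pieces. -/
def wB (p : ℝ × ℝ) (j : ℤ) : ℝ := Real.sqrt (4 * (p.1 - p.2 ^ 3 / 4) * (2:ℝ) ^ (2 * j) / (3 * p.2))

/-- Candidate map for the `B`-pieces. -/
def gB (p : ℝ × ℝ) (t : ℤ × ℤ × ℤ) : ℤ × ℤ × ℤ :=
  let j := cB p + t.1
  let d := ⌊(2:ℝ) ^ j * p.2⌋ + t.2.1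
  let l := ⌊(wB p j - (d : ℝ) - 3) / 2⌋ + 1 + t.2.2
  (j, l + d, l)

/-- A 12-element parameter box. -/
def box : Finset (ℤ × ℤ × ℤ) := (Finset.Icc 0 2) ×ˢ (Finset.Icc 0 1) ×ˢ (Finset.Icc 0 1)

lemma card_box : box.card = 12 := by decide

end

lemma tsum_le_card {ι κ : Type*} [DecidableEq κ] (g : ι → ℝ≥0∞) (f : ι → κ)
    (hf : Function.Injective f) (F : Finset κ)
    (h1 : ∀ i, g i ≤ 1) (h0 : ∀ i, g i ≠ 0 → f i ∈ F) :
    ∑' i, g i ≤ (F.card : ℝ≥0∞) := by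
  classical
  rw [ENNReal.tsum_eq_iSup_sum]
  refine iSup_le fun s => ?_
  calc ∑ i ∈ s, g i = ∑ i ∈ s.filter (fun i => f i ∈ F), g i := by
        refine (Finset.sum_filter_of_ne fun i _ h => h0 i h).symm
    _ ≤ ∑ i ∈ s.filter (fun i => f i ∈ F), 1 := Finset.sum_le_sum fun i _ => h1 i
    _ = ((s.filter (fun i => f i ∈ F)).card : ℝ≥0∞) := by simp
    _ ≤ (F.card : ℝ≥0∞) := by
        refine Nat.cast_le.mpr ?_
        exact Finset.card_le_card_of_injOn f (fun i hi => (Finset.mem_filter.mp hi).2) hf.injOn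

lemma nullset : volume {p : ℝ × ℝ | ∃ j n : ℤ, (2:ℝ)^j * p.2 = n} = 0 := by
  have hsub : {p : ℝ × ℝ | ∃ j n : ℤ, (2:ℝ)^j * p.2 = n} ⊆
      ⋃ (j : ℤ) (n : ℤ), {p : ℝ × ℝ | p.2 = (n:ℝ) / 2^j} := by
    rintro p ⟨j, n, h⟩
    refine Set.mem_iUnion.mpr ⟨j, Set.mem_iUnion.mpr ⟨n, ?_⟩⟩
    have h2 : (2:ℝ)^j ≠ 0 := by positivity
    show p.2 = (n:ℝ) / 2^j
    rw [eq_div_iff h2]; linarith [h]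
  refine measure_mono_null hsub ?_
  refine measure_iUnion_null fun j => measure_iUnion_null fun n => ?_
  have h : {p : ℝ × ℝ | p.2 = (n:ℝ)/2^j} = Set.univ ×ˢ {(n:ℝ)/2^j} := by
    ext p
    simp only [Set.mem_prod, Set.mem_univ, Set.mem_singleton_iff, true_and, Set.mem_setOf_eq]
  rw [h, Measure.volume_eq_prod, Measure.prod_prod]
  simp

lemma stepLo {P X c D : ℝ} (hP : 0 < P) (h : 3/4 * (c / P^2) * X ≤ D) :
    3 * c * (P * X) ≤ 4 * D * P^3 := by
  have hP2 : (0:ℝ) < P^2 := by positivity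
  have h2 := mul_le_mul_of_nonneg_right h (by positivity : (0:ℝ) ≤ 4 * P^3)
  calc 3 * c * (P * X) = 3/4 * (c / P^2) * X * (4 * P^3) := by field_simp
    _ ≤ D * (4 * P^3) := h2
    _ = 4 * D * P^3 := by ring

lemma stepHi {P X c D : ℝ} (hP : 0 < P) (h : D ≤ 3/4 * (c / P^2) * X) :
    4 * D * P^3 ≤ 3 * c * (P * X) := by
  have h2 := mul_le_mul_of_nonneg_right h (by positivity : (0:ℝ) ≤ 4 * P^3)
  calc 4 * D * P^3 = D * (4 * P^3) := by ring
    _ ≤ 3/4 * (c / P^2) * X * (4 * P^3) := h2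
    _ = 3 * c * (P * X) := by field_simp

lemma coreA {P X M K S : ℝ} (hP : 0 < P) (hS : 2 ≤ S) (hSX : S ≤ P*X)
    (hK : 0 ≤ K) (hK2 : 2*K ≤ S+3)
    (hlo : 3*(P*X) ≤ 4*M*P^3 + K/25) (hhi : 4*M*P^3 ≤ 48*(P*X) + K/25) :
    X < 2*M*P^2 ∧ M*P^2 < 16*X := by
  have hPX : 2 ≤ P*X := le_trans hS hSX
  have hX : 0 < X := by
    by_contra h
    push_neg at h
    nlinarith [mul_nonpos_of_nonneg_of_nonpos hP.le h]
  have hKPX : K/25 ≤ (P*X)/20 := by nlinarith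
  constructor
  · nlinarith [mul_pos hP hX, sq_nonneg P, mul_pos hP (mul_pos hP hX)]
  · nlinarith [mul_pos hP hX, mul_pos hP (mul_pos hP hX)]

lemma coreB {P X M K S w : ℝ} (hP : 0 < P) (hS : 2 ≤ S) (hd1 : 1 ≤ P*X)
    (hK : 0 ≤ K) (hK2 : 2*K ≤ S+3)
    (hlo : 3*S^2*(P*X) ≤ 4*M*P^3 + K/25) (hhi : 4*M*P^3 ≤ 3*(S+2)^2*(P*X) + K/25)
    (hw : 0 ≤ w) (hw2 : w^2*(3*X) = 4*M*P^2) :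
    S < w + 1 ∧ w < S + 3 := by
  have hX : 0 < X := by
    by_contra h
    push_neg at h
    nlinarith [mul_nonpos_of_nonneg_of_nonpos hP.le h]
  have hPX0 : 0 < P*X := by positivity
  have hKPX : K/25 ≤ ((S+3)/50)*(P*X) := by nlinarith
  have h4 : 4*M*P^3 = w^2*(3*X)*P := by rw [hw2]; ring
  have h1 : S^2 ≤ w^2 + (S+3)/150 := by
    rw [h4] at hlo
    nlinarith [hPX0]
  have h2 : w^2 ≤ (S+2)^2 + (S+3)/150 := by
    rw [h4] at hhi
    nlinarith [hPX0]
  constructor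
  · by_contra h
    push_neg at h
    nlinarith
  · by_contra h
    push_neg at h
    nlinarith

set_option maxHeartbeats 2000000 in
lemma memFA (p : ℝ × ℝ) (hni : ∀ j n : ℤ, (2:ℝ)^j * p.2 ≠ n)
    (j k l : ℤ) (hkl : (j, k, l) ∈ Lam) (hp : p ∈ tildeA j k l) :
    (j, k, l) ∈ Finset.image (gA p) box := by
  obtain ⟨hk0', hl0', hdisj'⟩ := hkl
  have hk0 : (0:ℤ) ≤ k := hk0'
  have hl0 : (0:ℤ) ≤ l := hl0'
  have hdisj : l - k = -3 ∨ l - k = -2 ∨ l - k = 2 ∨ l - k = 3 := hdisj'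
  simp only [tildeA, enlarge, Set.mem_setOf_eq] at hp
  obtain ⟨τ', hτ', hmem⟩ := hp
  simp only [setA, Set.mem_setOf_eq] at hmem
  obtain ⟨h1, h2, h3⟩ := hmem
  set ξ := p.2 with hξdef
  set P := (2:ℝ)^j with hPdef
  have hP : 0 < P := zpow_pos (by norm_num) j
  have hP2 : (2:ℝ)^(2*j) = P^2 := by rw [hPdef, mul_comm, zpow_mul]; norm_num [zpow_ofNat]
  have hP3 : (2:ℝ)^(3*j) = P^3 := by rw [hPdef, mul_comm, zpow_mul]; norm_num [zpow_ofNat]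
  set M := p.1 - ξ^3/4 with hMdef
  clear_value ξ P M
  have hs2 : (2:ℤ) ≤ k + l := by omega
  have hSP : ((k:ℝ)+l) ≤ P * ξ := by
    rw [div_le_iff₀ hP] at h1; linarith
  have hPS : P * ξ ≤ (k:ℝ)+l+2 := by
    rw [le_div_iff₀ hP] at h2; linarith
  have hS2R : (2:ℝ) ≤ (k:ℝ)+l := by exact_mod_cast hs2
  have hξpos : 0 < ξ := by nlinarith
  rw [hP3] at hτ'
  have habs := abs_le.mp hτ'
  have hwin : 3*(P*ξ) ≤ 4*M*P^3 + (k:ℝ)/25 ∧ 4*M*P^3 ≤ 48*(P*ξ) + (k:ℝ)/25 := by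
    have e2 : -((k:ℝ)/25) ≤ τ' * (4*P^3) := by
      calc -((k:ℝ)/25) = (-((k:ℝ)/(100*P^3)))*(4*P^3) := by
              field_simp [hP.ne']; ring
        _ ≤ τ' * (4*P^3) := mul_le_mul_of_nonneg_right habs.1 (by nlinarith [pow_pos hP 3])
    have e3 : τ' * (4*P^3) ≤ (k:ℝ)/25 := by
      calc τ' * (4*P^3) ≤ ((k:ℝ)/(100*P^3)) * (4*P^3) :=
            mul_le_mul_of_nonneg_right habs.2 (by nlinarith [pow_pos hP 3])
        _ = (k:ℝ)/25 := by field_simp [hP.ne']; ring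
    have main : ∀ c1 c2 : ℝ, 1 ≤ c1 → c2 ≤ 16 →
        3/4*(c1/P^2)*ξ ≤ M - τ' → M - τ' ≤ 3/4*(c2/P^2)*ξ →
        3*(P*ξ) ≤ 4*M*P^3 + (k:ℝ)/25 ∧ 4*M*P^3 ≤ 48*(P*ξ) + (k:ℝ)/25 := by
      intro c1 c2 hc1 hc2 hlo hhi
      have t1 := stepLo hP hlo
      have t2 := stepHi hP hhi
      constructor
      · linarith [t1, e2, mul_nonneg (sub_nonneg.mpr hc1) (mul_pos hP hξpos).le]
      · linarith [t2, e3, mul_nonneg (by linarith : (0:ℝ) ≤ 16 - c2) (mul_pos hP hξpos).le]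
    rw [hP2] at h3
    rcases hdisj with hc|hc|hc|hc
    · have hlt : l < k := by omega
      rw [if_pos hlt] at h3
      have h' : (l:ℝ) - k = -3 := by exact_mod_cast hc
      have e4 : ((k:ℝ) - l - 1)^2 = 4 := by
        have h'' : (k:ℝ) - l - 1 = 2 := by linarith
        rw [h'']; norm_num
      have e5 : ((k:ℝ) - l + 1)^2 = 16 := by
        have h'' : (k:ℝ) - l + 1 = 4 := by linarith
        rw [h'']; norm_num
      exact main (((k:ℝ)-l-1)^2) (((k:ℝ)-l+1)^2) (by rw [e4]; norm_num) (by rw [e5]) (by linarith [h3.1]) (by linarith [h3.2])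
    · have hlt : l < k := by omega
      rw [if_pos hlt] at h3
      have h' : (l:ℝ) - k = -2 := by exact_mod_cast hc
      have e4 : ((k:ℝ) - l - 1)^2 = 1 := by
        have h'' : (k:ℝ) - l - 1 = 1 := by linarith
        rw [h'']; norm_num
      have e5 : ((k:ℝ) - l + 1)^2 = 9 := by
        have h'' : (k:ℝ) - l + 1 = 3 := by linarith
        rw [h'']; norm_num
      exact main (((k:ℝ)-l-1)^2) (((k:ℝ)-l+1)^2) (by rw [e4]) (by rw [e5]; norm_num) (by linarith [h3.1]) (by linarith [h3.2])
    · have hlt : ¬ (l < k) := by omega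
      rw [if_neg hlt] at h3
      have h' : (l:ℝ) - k = 2 := by exact_mod_cast hc
      have e4 : ((k:ℝ) - l + 1)^2 = 1 := by
        have h'' : (k:ℝ) - l + 1 = -1 := by linarith
        rw [h'']; norm_num
      have e5 : ((k:ℝ) - l - 1)^2 = 9 := by
        have h'' : (k:ℝ) - l - 1 = -3 := by linarith
        rw [h'']; norm_num
      exact main (((k:ℝ)-l+1)^2) (((k:ℝ)-l-1)^2) (by rw [e4]) (by rw [e5]; norm_num) (by linarith [h3.1]) (by linarith [h3.2])
    · have hlt : ¬ (l < k) := by omega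
      rw [if_neg hlt] at h3
      have h' : (l:ℝ) - k = 3 := by exact_mod_cast hc
      have e4 : ((k:ℝ) - l + 1)^2 = 4 := by
        have h'' : (k:ℝ) - l + 1 = -2 := by linarith
        rw [h'']; norm_num
      have e5 : ((k:ℝ) - l - 1)^2 = 16 := by
        have h'' : (k:ℝ) - l - 1 = -4 := by linarith
        rw [h'']; norm_num
      exact main (((k:ℝ)-l+1)^2) (((k:ℝ)-l-1)^2) (by rw [e4]; norm_num) (by rw [e5]) (by linarith [h3.1]) (by linarith [h3.2])
  have hK2 : 2*(k:ℝ) ≤ ((k:ℝ)+l)+3 := by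
    have h'' : 2*k ≤ (k+l)+3 := by omega
    exact_mod_cast h''
  obtain ⟨hc1, hc2⟩ := coreA hP hS2R hSP (by exact_mod_cast hk0) hK2 hwin.1 hwin.2
  have hM : 0 < M := by
    by_contra h
    push_neg at h
    nlinarith [pow_pos hP 2]
  set L := Int.log 2 (ξ / M) with hLdef
  have hr1 : (2:ℝ)^L ≤ ξ/M := Int.zpow_log_le_self (by norm_num) (div_pos hξpos hM)
  have hr2 : ξ/M < 2^(L+1) := Int.lt_zpow_succ_log_self (by norm_num) _
  have hL1 : L ≤ 2*j := by
    have ha : ξ/M < 2*P^2 := (div_lt_iff₀ hM).mpr (by nlinarith)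
    have hb : (2:ℝ)^(2*j+1) = 2*P^2 := by
      rw [zpow_add₀ (by norm_num : (2:ℝ) ≠ 0), hP2]; ring
    have hcmp : (2:ℝ)^L < 2^(2*j+1) := by rw [hb]; linarith
    have := (zpow_lt_zpow_iff_right₀ (by norm_num : (1:ℝ) < 2)).mp hcmp
    omega
  have hL2 : 2*j ≤ L + 4 := by
    have ha : P^2 < (16*ξ)/M := (lt_div_iff₀ hM).mpr (by nlinarith)
    have hb : (2:ℝ)^(L+5) = 16*(2:ℝ)^(L+1) := by
      rw [show L+5 = (L+1)+4 from by ring, zpow_add₀ (by norm_num : (2:ℝ) ≠ 0)]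
      norm_num
      ring
    have hd : (16*ξ)/M = 16*(ξ/M) := by ring
    have hcmp : (2:ℝ)^(2*j) < 2^(L+5) := by
      rw [hP2, hb]
      rw [hd] at ha
      linarith
    have := (zpow_lt_zpow_iff_right₀ (by norm_num : (1:ℝ) < 2)).mp hcmp
    omega
  have hcA : cA p = (L+1)/2 := by
    rw [cA, ← hξdef, ← hMdef, ← hLdef]
  have hDl : k + l ≤ ⌊P*ξ⌋ := Int.le_floor.mpr (by push_cast; linarith)
  have hDu : ⌊P*ξ⌋ ≤ k + l + 1 := by
    by_contra h
    push_neg at h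
    have hfl := Int.floor_le (P*ξ)
    have hcast : ((k:ℝ)+l+2) ≤ (⌊P*ξ⌋ : ℝ) := by
      have : ((k+l+2 : ℤ):ℝ) ≤ ((⌊P*ξ⌋ : ℤ):ℝ) := by
        exact_mod_cast (show k+l+2 ≤ ⌊P*ξ⌋ by omega)
      push_cast at this
      linarith
    have heq : P*ξ = ((k+l+2 : ℤ):ℝ) := by push_cast; linarith
    rw [hPdef] at heq
    exact hni j (k+l+2) heq
  obtain he | he : l - k = 2 + (k+l) % 2 ∨ k - l = 2 + (k+l) % 2 := by omega
  · refine Finset.mem_image.mpr ⟨(j - cA p, ⌊P*ξ⌋ - (k+l), 0), ?_, ?_⟩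
    · simp only [box, Finset.mem_product, Finset.mem_Icc]
      omega
    · simp only [gA]
      rw [show cA p + (j - cA p) = j from by ring, ← hPdef, ← hξdef]
      simp only [Prod.mk.injEq, if_pos rfl, reduceIte]
      refine ⟨trivial, ?_, ?_⟩ <;> omega
  · refine Finset.mem_image.mpr ⟨(j - cA p, ⌊P*ξ⌋ - (k+l), 1), ?_, ?_⟩
    · simp only [box, Finset.mem_product, Finset.mem_Icc]
      omega
    · simp only [gA]
      rw [show cA p + (j - cA p) = j from by ring, ← hPdef, ← hξdef]
      simp only [Prod.mk.injEq, reduceIte, if_neg (by norm_num : ¬ (1:ℤ) = 0)]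
      refine ⟨trivial, ?_, ?_⟩ <;> omega

set_option maxHeartbeats 2000000 in
lemma memFB (p : ℝ × ℝ) (hni : ∀ j n : ℤ, (2:ℝ)^j * p.2 ≠ n)
    (j k l : ℤ) (hkl : (j, k, l) ∈ Lam) (hp : p ∈ tildeB j k l) :
    (j, k, l) ∈ Finset.image (gB p) box := by
  obtain ⟨hk0', hl0', hdisj'⟩ := hkl
  have hk0 : (0:ℤ) ≤ k := hk0'
  have hl0 : (0:ℤ) ≤ l := hl0'
  have hdisj : l - k = -3 ∨ l - k = -2 ∨ l - k = 2 ∨ l - k = 3 := hdisj'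
  simp only [tildeB, enlarge, Set.mem_setOf_eq] at hp
  obtain ⟨τ', hτ', hmem⟩ := hp
  simp only [setB, Set.mem_setOf_eq] at hmem
  obtain ⟨h1, h2, h3⟩ := hmem
  set ξ := p.2 with hξdef
  set P := (2:ℝ)^j with hPdef
  have hP : 0 < P := zpow_pos (by norm_num) j
  have hP2 : (2:ℝ)^(2*j) = P^2 := by rw [hPdef, mul_comm, zpow_mul]; norm_num [zpow_ofNat]
  have hP3 : (2:ℝ)^(3*j) = P^3 := by rw [hPdef, mul_comm, zpow_mul]; norm_num [zpow_ofNat]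
  set M := p.1 - ξ^3/4 with hMdef
  clear_value ξ P M
  have hs2 : (2:ℤ) ≤ k + l := by omega
  have hS2R : (2:ℝ) ≤ (k:ℝ)+l := by exact_mod_cast hs2
  have hd1R : ((k:ℝ) - l - 1) ≤ P * ξ := by
    rw [div_le_iff₀ hP] at h1; linarith
  have hd2R : P * ξ ≤ ((k:ℝ) - l + 1) := by
    rw [le_div_iff₀ hP] at h2; linarith
  rw [hP3] at hτ'
  have habs := abs_le.mp hτ'
  have e2 : -((k:ℝ)/25) ≤ τ' * (4*P^3) := by
    calc -((k:ℝ)/25) = (-((k:ℝ)/(100*P^3)))*(4*P^3) := by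
            field_simp [hP.ne']; ring
      _ ≤ τ' * (4*P^3) := mul_le_mul_of_nonneg_right habs.1 (by nlinarith [pow_pos hP 3])
  have e3 : τ' * (4*P^3) ≤ (k:ℝ)/25 := by
    calc τ' * (4*P^3) ≤ ((k:ℝ)/(100*P^3)) * (4*P^3) :=
          mul_le_mul_of_nonneg_right habs.2 (by nlinarith [pow_pos hP 3])
      _ = (k:ℝ)/25 := by field_simp [hP.ne']; ring
  obtain ⟨X, N, hXabs, hMN, hPX1, hPX4, hlo, hhi⟩ :
      ∃ X N : ℝ, X = |ξ| ∧ M * X = N * ξ ∧ 1 ≤ P*X ∧ P*X ≤ 4 ∧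
        3*((k:ℝ)+l)^2*(P*X) ≤ 4*N*P^3 + (k:ℝ)/25 ∧
        4*N*P^3 ≤ 3*(((k:ℝ)+l)+2)^2*(P*X) + (k:ℝ)/25 := by
    rw [hP2] at h3
    by_cases hlt : l < k
    · rw [if_pos hlt] at h3
      have hd2 : (2:ℤ) ≤ k - l := by omega
      have hd2R' : (2:ℝ) ≤ (k:ℝ) - l := by exact_mod_cast hd2
      have hd3 : k - l ≤ 3 := by omega
      have hd3R : (k:ℝ) - l ≤ 3 := by exact_mod_cast hd3
      have hξpos : 0 < ξ := by nlinarith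
      refine ⟨ξ, M, (abs_of_pos hξpos).symm, by ring, by linarith, by linarith, ?_, ?_⟩
      · have t1 := stepLo hP (show 3/4 * ((((k:ℝ)+l)^2) / P^2) * ξ ≤ M - τ' by linarith [h3.1])
        linarith [t1, e2]
      · have t2 := stepHi hP (show M - τ' ≤ 3/4 * (((((k:ℝ)+l)+2)^2) / P^2) * ξ by linarith [h3.2])
        linarith [t2, e3]
    · rw [if_neg hlt] at h3
      have hd2 : k - l ≤ -2 := by omega
      have hd2R' : (k:ℝ) - l ≤ -2 := by exact_mod_cast hd2
      have hd3 : (-3:ℤ) ≤ k - l := by omega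
      have hd3R : (-3:ℝ) ≤ (k:ℝ) - l := by exact_mod_cast hd3
      have hξneg : ξ < 0 := by nlinarith
      refine ⟨-ξ, -M, (abs_of_neg hξneg).symm, by ring, by linarith, by linarith, ?_, ?_⟩
      · have t2 := stepHi hP (show M - τ' ≤ 3/4 * ((((k:ℝ)+l)^2) / P^2) * ξ by linarith [h3.2])
        have expand : 3*((k:ℝ)+l)^2*(P*(-ξ)) = -(3*((k:ℝ)+l)^2*(P*ξ)) := by ring
        linarith [t2, e3]
      · have t1 := stepLo hP (show 3/4 * (((((k:ℝ)+l)+2)^2) / P^2) * ξ ≤ M - τ' by linarith [h3.1])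
        linarith [t1, e2]
  set S := ((k:ℝ)+l) with hSdef
  have hXpos : 0 < X := by nlinarith
  have hξne : ξ ≠ 0 := by
    intro h
    rw [h] at hXabs
    simp at hXabs
    linarith
  have hK2R : 2*(k:ℝ) ≤ S + 3 := by
    rw [hSdef]
    have h'' : 2*k ≤ (k+l)+3 := by omega
    exact_mod_cast h''
  have hk0R : (0:ℝ) ≤ (k:ℝ) := by exact_mod_cast hk0
  have hk25' : (k:ℝ)/25 ≤ ((S+3)/50)*(P*X) := by nlinarith
  have hN : 0 < N := by
    by_contra h
    push_neg at h
    nlinarith [pow_pos hP 3,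
      mul_nonneg (show (0:ℝ) ≤ 3*S^2 - (S+3)/50 by nlinarith) (by nlinarith : (0:ℝ) ≤ P*X)]
  set w := wB p j with hwdef
  have hw0 : 0 ≤ w := Real.sqrt_nonneg _
  have hargeq : 4*M*(2:ℝ)^(2*j)/(3*ξ) = 4*N*P^2/(3*X) := by
    rw [hP2, div_eq_div_iff (by simpa using hξne : (3:ℝ)*ξ ≠ 0) (by positivity)]
    linear_combination 12*P^2*hMN
  have hwsq : w^2 = 4*N*P^2/(3*X) := by
    rw [hwdef]
    simp only [wB]
    rw [← hξdef, ← hMdef, hargeq]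
    exact Real.sq_sqrt (by positivity)
  have hw2 : w^2*(3*X) = 4*N*P^2 := by
    rw [hwsq]
    field_simp
  obtain ⟨hS1, hS2⟩ := coreB hP hS2R hPX1 hk0R hK2R hlo hhi hw0 hw2
  -- d-range
  have hDd : ⌊P*ξ⌋ ≤ k - l := by
    by_contra h
    push_neg at h
    have hfl := Int.floor_le (P*ξ)
    have hcast : ((k:ℝ) - l + 1) ≤ (⌊P*ξ⌋ : ℝ) := by
      have : ((k - l + 1 : ℤ):ℝ) ≤ ((⌊P*ξ⌋ : ℤ):ℝ) := by
        exact_mod_cast (show k - l + 1 ≤ ⌊P*ξ⌋ by omega)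
      push_cast at this
      linarith
    have heq : P*ξ = ((k - l + 1 : ℤ):ℝ) := by push_cast; linarith
    rw [hPdef] at heq
    exact hni j (k - l + 1) heq
  have hdD : k - l ≤ ⌊P*ξ⌋ + 1 := by
    have hfl := Int.lt_floor_add_one (P*ξ)
    have : ((k - l - 1 : ℤ):ℝ) < ((⌊P*ξ⌋ + 1 : ℤ):ℝ) := by push_cast; linarith
    have := (show k - l - 1 < ⌊P*ξ⌋ + 1 by exact_mod_cast this)
    omega
  -- j-range
  have habsξpos : 0 < |ξ| := abs_pos.mpr hξne
  have hXge : 1/P ≤ X := by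
    rw [div_le_iff₀ hP]
    linarith
  have hinv : (2:ℝ)^(-j) = 1/P := by
    rw [hPdef, zpow_neg, one_div]
  have hx1 : (2:ℝ)^(-j) ≤ |ξ| := by
    rw [hinv, ← hXabs]
    exact hXge
  have h4P : X ≤ 4/P := by
    rw [le_div_iff₀ hP]
    linarith
  have hinv2 : (2:ℝ)^(2-j) = 4/P := by
    rw [hPdef, zpow_sub₀ (by norm_num : (2:ℝ) ≠ 0)]
    norm_num
  have hx2 : |ξ| ≤ (2:ℝ)^(2-j) := by
    rw [hinv2, ← hXabs]
    exact h4P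
  have hj1 : -j ≤ Int.log 2 |ξ| := by
    rw [← Int.zpow_le_iff_le_log (by norm_num) habsξpos]
    exact_mod_cast hx1
  have hx2' : |ξ| < (2:ℝ)^(3-j) := by
    refine lt_of_le_of_lt hx2 ?_
    exact zpow_lt_zpow_right₀ (by norm_num) (by omega)
  have hj2 : Int.log 2 |ξ| < 3 - j := by
    rw [← Int.lt_zpow_iff_log_lt (by norm_num) habsξpos]
    exact_mod_cast hx2'
  have hcB : cB p = -Int.log 2 |ξ| := by
    rw [cB, ← hξdef]
  -- l-range
  set T := ⌊(w - ((k - l : ℤ):ℝ) - 3)/2⌋ with hTdef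
  have hdcast : ((k - l : ℤ):ℝ) = (k:ℝ) - l := by push_cast; ring
  have hfloorle : (T:ℝ) ≤ (w - ((k - l : ℤ):ℝ) - 3)/2 := Int.floor_le _
  have hfloorlt : (w - ((k - l : ℤ):ℝ) - 3)/2 < (T:ℝ) + 1 := by
    have := Int.lt_floor_add_one ((w - ((k - l : ℤ):ℝ) - 3)/2)
    rw [← hTdef] at this
    exact_mod_cast this
  rw [hdcast] at hfloorle hfloorlt
  have hT1 : T < l := by
    have hr : (T:ℝ) < (l:ℝ) := by
      have hlreal : (l:ℝ) = (S - ((k:ℝ) - l))/2 := by rw [hSdef]; ring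
      linarith
    exact_mod_cast hr
  have hT2 : l < T + 3 := by
    have hr : (l:ℝ) < (T:ℝ) + 3 := by
      have hlreal : (l:ℝ) = (S - ((k:ℝ) - l))/2 := by rw [hSdef]; ring
      linarith
    exact_mod_cast hr
  refine Finset.mem_image.mpr ⟨(j - cB p, (k - l) - ⌊P*ξ⌋, l - (T+1)), ?_, ?_⟩
  · simp only [box, Finset.mem_product, Finset.mem_Icc]
    omega
  · simp only [gB]
    rw [show cB p + (j - cB p) = j from by ring, ← hPdef, ← hξdef,
        show ⌊P*ξ⌋ + ((k - l) - ⌊P*ξ⌋) = k - l from by ring, ← hwdef, ← hTdef]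
    simp only [Prod.mk.injEq]
    exact ⟨trivial, by omega, by omega⟩


lemma indicator_le_one {S : Set (ℝ × ℝ)} (p : ℝ × ℝ) :
    S.indicator (fun _ => (1 : ℝ≥0∞)) p ≤ 1 := by
  classical
  by_cases h : p ∈ S
  · simp [Set.indicator_of_mem h]
  · simp [Set.indicator_of_notMem h]

/-- Almost orthogonality of the enlarged Whitney pieces. -/
theorem almost_orthogonality :
    (∀ᵐ p : ℝ × ℝ ∂volume,
      (∑' v : Lam, (tildeA v.1.1 v.1.2.1 v.1.2.2).indicator (fun _ => (1 : ℝ≥0∞)) p) ≤ 12) ∧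
    (∀ᵐ p : ℝ × ℝ ∂volume,
      (∑' v : Lam, (tildeB v.1.1 v.1.2.1 v.1.2.2).indicator (fun _ => (1 : ℝ≥0∞)) p) ≤ 12) := by
  classical
  have hnull : volume {p : ℝ × ℝ | ∃ j n : ℤ, (2:ℝ)^j * p.2 = n} = 0 := nullset
  have hae : ∀ᵐ p : ℝ × ℝ ∂volume, ∀ j n : ℤ, (2:ℝ)^j * p.2 ≠ n := by
    have h2 : ∀ᵐ p : ℝ × ℝ ∂volume, p ∉ {p : ℝ × ℝ | ∃ j n : ℤ, (2:ℝ)^j * p.2 = n} :=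
      (MeasureTheory.measure_eq_zero_iff_ae_notMem).mp hnull
    filter_upwards [h2] with p hp j n hcon
    exact hp ⟨j, n, hcon⟩
  have hcard : ∀ (f : ℤ × ℤ × ℤ → ℤ × ℤ × ℤ),
      ((Finset.image f box).card : ℝ≥0∞) ≤ 12 := by
    intro f
    have h := Finset.card_image_le (f := f) (s := box)
    rw [card_box] at h
    calc ((Finset.image f box).card : ℝ≥0∞) ≤ ((12:ℕ) : ℝ≥0∞) := Nat.cast_le.mpr h
      _ = 12 := by norm_num
  constructor
  · filter_upwards [hae] with p hp
    refine le_trans (tsum_le_card _ (fun v : Lam => (v : ℤ × ℤ × ℤ)) Subtype.val_injective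
      (Finset.image (gA p) box) (fun v => indicator_le_one p) ?_) (hcard (gA p))
    intro v hv
    have hmem : p ∈ tildeA (v : ℤ × ℤ × ℤ).1 (v : ℤ × ℤ × ℤ).2.1 (v : ℤ × ℤ × ℤ).2.2 := by
      by_contra hno
      exact hv (Set.indicator_of_notMem hno _)
    have := memFA p hp (v : ℤ × ℤ × ℤ).1 (v : ℤ × ℤ × ℤ).2.1 (v : ℤ × ℤ × ℤ).2.2 v.2 hmem
    exact this
  · filter_upwards [hae] with p hp
    refine le_trans (tsum_le_card _ (fun v : Lam => (v : ℤ × ℤ × ℤ)) Subtype.val_injective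
      (Finset.image (gB p) box) (fun v => indicator_le_one p) ?_) (hcard (gB p))
    intro v hv
    have hmem : p ∈ tildeB (v : ℤ × ℤ × ℤ).1 (v : ℤ × ℤ × ℤ).2.1 (v : ℤ × ℤ × ℤ).2.2 := by
      by_contra hno
      exact hv (Set.indicator_of_notMem hno _)
    have := memFB p hp (v : ℤ × ℤ × ℤ).1 (v : ℤ × ℤ × ℤ).2.1 (v : ℤ × ℤ × ℤ).2.2 v.2 hmem
    exact this
end

section
/- Pointwise kernel bound for enlarged curved boxes: There is an absolute constant C > 0 with the following property. Let j ∈ ℤ, k ∈ ℤ_{≥1}, λ := k/2^{3j}, and let 0 ≤ a ≤ b and c ≤ d be real numbers satisfying (b+a)(d−c) ≤ 200·k/2^{3j}, b−a ≤ 2/2^j, and b+a ≤ 10·k/2^j. Set R := {(τ,ξ) ∈ ℝ² : a ≤ ξ ≤ b, cξ ≤ τ − ξ³/4 ≤ dξ}, e := (a+b)/2, f := (c+d)/2, and K(t,x) := ∬_{R_{+λ/2}} e^{i(tτ + xξ)} dτ dξ. Then for all (t,x) ∈ ℝ², |K(t,x)| ≤ C·(k/2^{3j})·min( 2^{−j},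 |x + (3e²/4 + f)t|^{−1} ). -/
open MeasureTheory Filter Set
open scoped ENNReal NNReal

noncomputable def expI (r : ℝ) : ℂ := Complex.exp ((r : ℂ) * Complex.I)

lemma norm_expI (r : ℝ) : ‖expI r‖ = 1 := by
  rw [expI, Complex.norm_exp_ofReal_mul_I]

lemma expI_add (r s : ℝ) : expI (r + s) = expI r * expI s := by
  rw [expI, expI, expI, ← Complex.exp_add]; congr 1; push_cast; ring

lemma continuous_expI_comp {α : Type*} [TopologicalSpace α] {f : α → ℝ} (hf : Continuous f) :
    Continuous fun x => expI (f x) :=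
  Complex.continuous_exp.comp ((Complex.continuous_ofReal.comp hf).mul continuous_const)

noncomputable def Gint (t : ℝ) : ℝ → ℂ := fun y => ∫ σ in (0:ℝ)..y, expI (t * σ)

lemma hasDerivAt_Gint (t y : ℝ) : HasDerivAt (Gint t) (expI (t * y)) y :=
  ((continuous_expI_comp (continuous_const.mul continuous_id)).integral_hasStrictDerivAt 0 y).hasDerivAt

lemma Gint_sub (t y₁ y₂ : ℝ) : Gint t y₂ - Gint t y₁ = ∫ σ in y₁..y₂, expI (t * σ) :=
  intervalIntegral.integral_interval_sub_left
    ((continuous_expI_comp (continuous_const.mul continuous_id)).intervalIntegrable _ _)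
    ((continuous_expI_comp (continuous_const.mul continuous_id)).intervalIntegrable _ _)

noncomputable def Wfun (c d lam v t : ℝ) : ℝ → ℂ := fun ξ =>
  Gint t (ξ ^ 3 / 4 + (d - v) * ξ + lam / 2) - Gint t (ξ ^ 3 / 4 + (c - v) * ξ - lam / 2)

lemma hasDerivAt_Wfun (c d lam v t ξ : ℝ) :
    HasDerivAt (Wfun c d lam v t)
      ((3 * ξ ^ 2 / 4 + (d - v)) • expI (t * (ξ ^ 3 / 4 + (d - v) * ξ + lam / 2)) -
        (3 * ξ ^ 2 / 4 + (c - v)) • expI (t * (ξ ^ 3 / 4 + (c - v) * ξ - lam / 2))) ξ := by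
  have h1 : HasDerivAt (fun ξ : ℝ => ξ ^ 3) (3 * ξ ^ 2) ξ := by simpa using hasDerivAt_pow 3 ξ
  have hu : HasDerivAt (fun ξ : ℝ => ξ ^ 3 / 4 + (d - v) * ξ + lam / 2) (3 * ξ ^ 2 / 4 + (d - v)) ξ := by
    have h2 : HasDerivAt (fun ξ : ℝ => (d - v) * ξ) (d - v) ξ := by
      simpa using (hasDerivAt_id ξ).const_mul (d - v)
    simpa using ((h1.div_const 4).add h2).add_const (lam / 2)
  have hl : HasDerivAt (fun ξ : ℝ => ξ ^ 3 / 4 + (c - v) * ξ - lam / 2) (3 * ξ ^ 2 / 4 + (c - v)) ξ := by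
    have h2 : HasDerivAt (fun ξ : ℝ => (c - v) * ξ) (c - v) ξ := by
      simpa using (hasDerivAt_id ξ).const_mul (c - v)
    simpa using ((h1.div_const 4).add h2).sub_const (lam / 2)
  have hu1 := (hasDerivAt_Gint t (ξ ^ 3 / 4 + (d - v) * ξ + lam / 2)).scomp ξ hu
  have hl1 := (hasDerivAt_Gint t (ξ ^ 3 / 4 + (c - v) * ξ - lam / 2)).scomp ξ hl
  exact hu1.sub hl1

lemma Wfun_norm_le (c d lam v t ξ : ℝ) (hξ0 : 0 ≤ ξ) (hcd : c ≤ d) (hlam : 0 ≤ lam) :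
    ‖Wfun c d lam v t ξ‖ ≤ (d - c) * ξ + lam := by
  have hW2 : Wfun c d lam v t ξ =
      ∫ σ in (ξ ^ 3 / 4 + (c - v) * ξ - lam / 2)..(ξ ^ 3 / 4 + (d - v) * ξ + lam / 2), expI (t * σ) :=
    Gint_sub t _ _
  have hcd2 : c * ξ ≤ d * ξ := mul_le_mul_of_nonneg_right hcd hξ0
  rw [hW2]
  have hb := intervalIntegral.norm_integral_le_of_norm_le_const
    (a := ξ ^ 3 / 4 + (c - v) * ξ - lam / 2) (b := ξ ^ 3 / 4 + (d - v) * ξ + lam / 2)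
    (C := 1) (f := fun σ => expI (t * σ)) (fun σ _ => le_of_eq (norm_expI _))
  refine le_trans hb (le_of_eq ?_)
  rw [abs_of_nonneg (by nlinarith)]
  ring

lemma triv_bound (p q X CW : ℝ) (hpq : p ≤ q) (W : ℝ → ℂ)
    (hCW : ∀ ξ ∈ Set.Icc p q, ‖W ξ‖ ≤ CW) :
    ‖∫ ξ in p..q, expI (X * ξ) * W ξ‖ ≤ CW * (q - p) := by
  have hb := intervalIntegral.norm_integral_le_of_norm_le_const
    (C := CW) (f := fun ξ => expI (X * ξ) * W ξ) (fun ξ hξ => by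
      rw [Set.uIoc_of_le hpq] at hξ
      rw [norm_mul, norm_expI, one_mul]
      exact hCW ξ ⟨hξ.1.le, hξ.2⟩)
  rwa [abs_of_nonneg (sub_nonneg.2 hpq)] at hb

lemma ibp_bound (p q X CW CD : ℝ) (hpq : p ≤ q) (hX : X ≠ 0)
    (W W' : ℝ → ℂ) (hW : ∀ ξ, HasDerivAt W (W' ξ) ξ) (hW'c : Continuous W')
    (hCW : ∀ ξ ∈ Set.Icc p q, ‖W ξ‖ ≤ CW) (hCD : ∀ ξ ∈ Set.Icc p q, ‖W' ξ‖ ≤ CD) :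
    ‖∫ ξ in p..q, expI (X * ξ) * W ξ‖ * |X| ≤ 2 * CW + CD * (q - p) := by
  have hXpos : 0 < |X| := abs_pos.2 hX
  have hne : ((X : ℂ) * Complex.I) ≠ 0 :=
    mul_ne_zero (Complex.ofReal_ne_zero.2 hX) Complex.I_ne_zero
  have hcast : ∀ y : ℝ, ((X : ℂ) * Complex.I) * (y : ℂ) = ((X * y : ℝ) : ℂ) * Complex.I := by
    intro y; push_cast; ring
  have hvd : ∀ ξ : ℝ, HasDerivAt (fun y : ℝ => expI (X * y) / ((X : ℂ) * Complex.I)) (expI (X * ξ)) ξ := by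
    intro ξ
    have h0 : HasDerivAt (fun w : ℂ => ((X : ℂ) * Complex.I) * w) ((X : ℂ) * Complex.I) (ξ : ℂ) := by
      simpa using (hasDerivAt_id (ξ : ℂ)).const_mul ((X : ℂ) * Complex.I)
    have h5 : HasDerivAt (fun y : ℝ => Complex.exp (((X : ℂ) * Complex.I) * (y : ℂ)) / ((X : ℂ) * Complex.I))
        (Complex.exp (((X : ℂ) * Complex.I) * (ξ : ℂ)) * ((X : ℂ) * Complex.I) / ((X : ℂ) * Complex.I)) ξ :=
      (((Complex.hasDerivAt_exp _).comp (ξ : ℂ) h0).div_const _).comp_ofReal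
    rw [mul_div_cancel_right₀ _ hne] at h5
    have hfun : (fun y : ℝ => Complex.exp (((X : ℂ) * Complex.I) * (y : ℂ)) / ((X : ℂ) * Complex.I)) =
        fun y : ℝ => expI (X * y) / ((X : ℂ) * Complex.I) := by
      funext y; rw [hcast y]; rfl
    rw [hfun, hcast ξ] at h5
    exact h5
  have hibp := intervalIntegral.integral_mul_deriv_eq_deriv_mul
    (u := W) (u' := W') (v := fun y : ℝ => expI (X * y) / ((X : ℂ) * Complex.I))
    (v' := fun y : ℝ => expI (X * y))
    (fun y _ => hW y) (fun y _ => hvd y) (hW'c.intervalIntegrable p q)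
    ((continuous_expI_comp (continuous_const.mul continuous_id)).intervalIntegrable p q)
  have hflip : (∫ ξ in p..q, expI (X * ξ) * W ξ) = ∫ y in p..q, W y * expI (X * y) :=
    intervalIntegral.integral_congr (fun ξ _ => mul_comm _ _)
  have hnormv : ∀ y : ℝ, ‖expI (X * y) / ((X : ℂ) * Complex.I)‖ = 1 / |X| := by
    intro y
    rw [norm_div, norm_expI]
    congr 1
    simp
  have hCW0 : 0 ≤ CW := le_trans (norm_nonneg _) (hCW p ⟨le_refl p, hpq⟩)
  have hCD0 : 0 ≤ CD := le_trans (norm_nonneg _) (hCD p ⟨le_refl p, hpq⟩)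
  have hI : ‖∫ y in p..q, W' y * (expI (X * y) / ((X : ℂ) * Complex.I))‖ ≤ CD * (1 / |X|) * (q - p) := by
    have hb := intervalIntegral.norm_integral_le_of_norm_le_const
      (C := CD * (1 / |X|)) (f := fun y => W' y * (expI (X * y) / ((X : ℂ) * Complex.I)))
      (fun y hy => by
        rw [Set.uIoc_of_le hpq] at hy
        rw [norm_mul, hnormv]
        exact mul_le_mul_of_nonneg_right (hCD y ⟨hy.1.le, hy.2⟩) (by positivity))
    rwa [abs_of_nonneg (sub_nonneg.2 hpq)] at hb
  have hmain : ‖∫ ξ in p..q, expI (X * ξ) * W ξ‖ ≤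
      CW * (1 / |X|) + CW * (1 / |X|) + CD * (1 / |X|) * (q - p) := by
    rw [hflip, hibp]
    refine le_trans (norm_sub_le _ _) ?_
    refine add_le_add (le_trans (norm_sub_le _ _) (add_le_add ?_ ?_)) hI
    · rw [norm_mul, hnormv]
      exact mul_le_mul_of_nonneg_right (hCW q ⟨hpq, le_refl q⟩) (by positivity)
    · rw [norm_mul, hnormv]
      exact mul_le_mul_of_nonneg_right (hCW p ⟨le_refl p, hpq⟩) (by positivity)
  have hfin : (CW * (1 / |X|) + CW * (1 / |X|) + CD * (1 / |X|) * (q - p)) * |X| =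
      2 * CW + CD * (q - p) := by
    field_simp
    ring
  calc ‖∫ ξ in p..q, expI (X * ξ) * W ξ‖ * |X|
      ≤ (CW * (1 / |X|) + CW * (1 / |X|) + CD * (1 / |X|) * (q - p)) * |X| :=
        mul_le_mul_of_nonneg_right hmain (abs_nonneg X)
    _ = 2 * CW + CD * (q - p) := hfin

lemma enlarge_eq (a b c d lam : ℝ) (ha : 0 ≤ a) (hcd : c ≤ d) (hlam : 0 ≤ lam) :
    enlarge {p : ℝ × ℝ | a ≤ p.2 ∧ p.2 ≤ b ∧
        c * p.2 ≤ p.1 - p.2 ^ 3 / 4 ∧ p.1 - p.2 ^ 3 / 4 ≤ d * p.2} (lam / 2) =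
      {p : ℝ × ℝ | (a ≤ p.2 ∧ p.2 ≤ b) ∧
        p.2 ^ 3 / 4 + c * p.2 - lam / 2 ≤ p.1 ∧ p.1 ≤ p.2 ^ 3 / 4 + d * p.2 + lam / 2} := by
  ext p
  simp only [enlarge, Set.mem_setOf_eq]
  constructor
  · rintro ⟨τ', hτ', h1, h2, h3, h4⟩
    rw [abs_le] at hτ'
    exact ⟨⟨h1, h2⟩, by constructor <;> linarith [hτ'.1, hτ'.2]⟩
  · rintro ⟨⟨h1, h2⟩, h3, h4⟩
    have h0 : 0 ≤ p.2 := ha.trans h1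
    have hcd2 : c * p.2 ≤ d * p.2 := mul_le_mul_of_nonneg_right hcd h0
    refine ⟨p.1 - max (p.2 ^ 3 / 4 + c * p.2) (min p.1 (p.2 ^ 3 / 4 + d * p.2)), ?_, h1, h2, ?_, ?_⟩
    · rw [abs_le]
      constructor
      · have hm : max (p.2 ^ 3 / 4 + c * p.2) (min p.1 (p.2 ^ 3 / 4 + d * p.2)) ≤ p.1 + lam / 2 :=
          max_le (by linarith) ((min_le_left _ _).trans (by linarith))
        linarith
      · rcases le_total p.1 (p.2 ^ 3 / 4 + d * p.2) with h | h
        · have hm : p.1 ≤ max (p.2 ^ 3 / 4 + c * p.2) (min p.1 (p.2 ^ 3 / 4 + d * p.2)) :=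
            le_max_of_le_right (le_min le_rfl h)
          linarith
        · have hm : p.2 ^ 3 / 4 + d * p.2 ≤
              max (p.2 ^ 3 / 4 + c * p.2) (min p.1 (p.2 ^ 3 / 4 + d * p.2)) :=
            le_max_of_le_right (le_min h le_rfl)
          linarith
    · have hm := le_max_left (p.2 ^ 3 / 4 + c * p.2) (min p.1 (p.2 ^ 3 / 4 + d * p.2))
      linarith
    · have hm : max (p.2 ^ 3 / 4 + c * p.2) (min p.1 (p.2 ^ 3 / 4 + d * p.2)) ≤
          p.2 ^ 3 / 4 + d * p.2 := max_le (by linarith) (min_le_right _ _)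
      linarith

lemma kernel_formula (a b c d lam v t x : ℝ)
    (ha : 0 ≤ a) (hab : a ≤ b) (hcd : c ≤ d) (hlam : 0 < lam) :
    kernelK {p : ℝ × ℝ | a ≤ p.2 ∧ p.2 ≤ b ∧
        c * p.2 ≤ p.1 - p.2 ^ 3 / 4 ∧ p.1 - p.2 ^ 3 / 4 ≤ d * p.2} lam t x =
      ∫ ξ in a..b, expI ((x + v * t) * ξ) * Wfun c d lam v t ξ := by
  have hb0 : 0 ≤ b := ha.trans hab
  set f : ℝ × ℝ → ℂ := fun p => expI (t * p.1 + x * p.2) with hf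
  set E : Set (ℝ × ℝ) := {p : ℝ × ℝ | (a ≤ p.2 ∧ p.2 ≤ b) ∧
      p.2 ^ 3 / 4 + c * p.2 - lam / 2 ≤ p.1 ∧ p.1 ≤ p.2 ^ 3 / 4 + d * p.2 + lam / 2} with hE
  have hstep1 : kernelK {p : ℝ × ℝ | a ≤ p.2 ∧ p.2 ≤ b ∧
      c * p.2 ≤ p.1 - p.2 ^ 3 / 4 ∧ p.1 - p.2 ^ 3 / 4 ≤ d * p.2} lam t x = ∫ p in E, f p := by
    rw [kernelK, enlarge_eq a b c d lam ha hcd hlam.le]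
    rfl
  rw [hstep1]
  -- measurability
  have hEc : IsClosed E := by
    have hE2 : E = ({p : ℝ × ℝ | a ≤ p.2} ∩ {p : ℝ × ℝ | p.2 ≤ b}) ∩
        ({p : ℝ × ℝ | p.2 ^ 3 / 4 + c * p.2 - lam / 2 ≤ p.1} ∩
          {p : ℝ × ℝ | p.1 ≤ p.2 ^ 3 / 4 + d * p.2 + lam / 2}) := by
      rw [hE]; ext p; simp only [Set.mem_inter_iff, Set.mem_setOf_eq]
    rw [hE2]
    exact ((isClosed_le continuous_const continuous_snd).inter
        (isClosed_le continuous_snd continuous_const)).inter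
      ((isClosed_le (by fun_prop) continuous_fst).inter
        (isClosed_le continuous_fst (by fun_prop)))
  have hEm : MeasurableSet E := hEc.measurableSet
  -- finite measure
  have hsub : E ⊆ Set.Icc (-(b ^ 3 / 4 + (|c| + |d|) * b + lam)) (b ^ 3 / 4 + (|c| + |d|) * b + lam) ×ˢ
      Set.Icc a b := by
    rintro ⟨τ, ξ⟩ ⟨⟨h1, h2⟩, h3, h4⟩
    have h0 : 0 ≤ ξ := ha.trans h1
    have hc1 : -(|c| * b) ≤ c * ξ := by nlinarith [neg_abs_le c, abs_nonneg c]
    have hd1 : d * ξ ≤ |d| * b := by nlinarith [le_abs_self d, abs_nonneg d]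
    have hξ3 : ξ ^ 3 ≤ b ^ 3 := pow_le_pow_left₀ h0 h2 3
    have hξ30 : 0 ≤ ξ ^ 3 := by positivity
    refine ⟨Set.mem_Icc.2 ⟨?_, ?_⟩, Set.mem_Icc.2 ⟨h1, h2⟩⟩
    · simp only at h3
      nlinarith [mul_nonneg (abs_nonneg d) hb0, hlam.le]
    · simp only at h4
      nlinarith [mul_nonneg (abs_nonneg c) hb0, hlam.le]
  have hEfin : volume E ≠ ⊤ := by
    refine ne_top_of_le_ne_top ?_ (measure_mono hsub)
    have hprod : volume (Set.Icc (-(b ^ 3 / 4 + (|c| + |d|) * b + lam)) (b ^ 3 / 4 + (|c| + |d|) * b + lam) ×ˢ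
        Set.Icc a b) = volume (Set.Icc (-(b ^ 3 / 4 + (|c| + |d|) * b + lam)) (b ^ 3 / 4 + (|c| + |d|) * b + lam)) *
        volume (Set.Icc a b) := by
      rw [MeasureTheory.Measure.volume_eq_prod, MeasureTheory.Measure.prod_prod]
    rw [hprod, Real.volume_Icc, Real.volume_Icc]
    exact ENNReal.mul_ne_top ENNReal.ofReal_ne_top ENNReal.ofReal_ne_top
  -- integrability
  have hfc : Continuous f := by
    rw [hf]
    exact continuous_expI_comp (by fun_prop)
  have hfi : IntegrableOn f E :=
    Measure.integrableOn_of_bounded hEfin hfc.aestronglyMeasurable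
      (M := 1) (Filter.Eventually.of_forall fun p => le_of_eq (norm_expI _))
  have hind : Integrable (E.indicator f) (volume.prod volume) := by
    rw [← MeasureTheory.Measure.volume_eq_prod]
    exact (integrable_indicator_iff hEm).2 hfi
  have hstep2 : (∫ p in E, f p) = ∫ ξ : ℝ, ∫ τ : ℝ, E.indicator f (τ, ξ) := by
    rw [← MeasureTheory.integral_indicator hEm]
    calc (∫ p, E.indicator f p) = ∫ p, E.indicator f p ∂(volume.prod volume) := by
          rw [← MeasureTheory.Measure.volume_eq_prod]
      _ = ∫ ξ : ℝ, ∫ τ : ℝ, E.indicator f (τ, ξ) := MeasureTheory.integral_prod_symm _ hind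
  rw [hstep2]
  have hstep3 : ∀ ξ : ℝ, (∫ τ : ℝ, E.indicator f (τ, ξ)) =
      (Set.Icc a b).indicator (fun ξ' => ∫ τ in Set.Icc (ξ' ^ 3 / 4 + c * ξ' - lam / 2)
        (ξ' ^ 3 / 4 + d * ξ' + lam / 2), f (τ, ξ')) ξ := by
    intro ξ
    by_cases hξ : ξ ∈ Set.Icc a b
    · rw [Set.indicator_of_mem hξ, ← MeasureTheory.integral_indicator measurableSet_Icc]
      congr 1
      funext τ
      rw [Set.mem_Icc] at hξ
      simp only [hE, Set.indicator_apply, Set.mem_setOf_eq, Set.mem_Icc, hξ.1, hξ.2, true_and,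
        and_true]
    · have hz : ∀ τ : ℝ, E.indicator f (τ, ξ) = 0 := by
        intro τ
        apply Set.indicator_of_notMem
        rw [hE, Set.mem_Icc] at *
        intro hmem
        exact hξ ⟨hmem.1.1, hmem.1.2⟩
      rw [Set.indicator_of_notMem hξ]
      simp [hz]
  simp_rw [hstep3]
  rw [MeasureTheory.integral_indicator measurableSet_Icc,
    MeasureTheory.integral_Icc_eq_integral_Ioc, ← intervalIntegral.integral_of_le hab]
  apply intervalIntegral.integral_congr
  intro ξ hξ
  rw [Set.uIcc_of_le hab] at hξ
  show (∫ τ in Set.Icc (ξ ^ 3 / 4 + c * ξ - lam / 2) (ξ ^ 3 / 4 + d * ξ + lam / 2), f (τ, ξ)) =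
    expI ((x + v * t) * ξ) * Wfun c d lam v t ξ
  have h0 : 0 ≤ ξ := ha.trans hξ.1
  have hLU : ξ ^ 3 / 4 + c * ξ - lam / 2 ≤ ξ ^ 3 / 4 + d * ξ + lam / 2 := by
    nlinarith [mul_le_mul_of_nonneg_right hcd h0]
  rw [MeasureTheory.integral_Icc_eq_integral_Ioc, ← intervalIntegral.integral_of_le hLU]
  have e1 : ∀ τ : ℝ, f (τ, ξ) = expI (t * τ) * expI (x * ξ) := by
    intro τ
    rw [hf]
    exact expI_add (t * τ) (x * ξ)
  rw [intervalIntegral.integral_congr (fun τ _ => e1 τ), intervalIntegral.integral_mul_const]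
  have e2 : (∫ τ in (ξ ^ 3 / 4 + c * ξ - lam / 2)..(ξ ^ 3 / 4 + d * ξ + lam / 2), expI (t * τ)) =
      Wfun c d lam v t ξ * expI (t * (v * ξ)) := by
    have hW2 : Wfun c d lam v t ξ =
        ∫ σ in (ξ ^ 3 / 4 + (c - v) * ξ - lam / 2)..(ξ ^ 3 / 4 + (d - v) * ξ + lam / 2), expI (t * σ) :=
      Gint_sub t _ _
    rw [hW2, ← intervalIntegral.integral_mul_const]
    have e3 := intervalIntegral.integral_comp_add_right (a := ξ ^ 3 / 4 + (c - v) * ξ - lam / 2)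
      (b := ξ ^ 3 / 4 + (d - v) * ξ + lam / 2) (fun τ => expI (t * τ)) (v * ξ)
    rw [show ξ ^ 3 / 4 + (c - v) * ξ - lam / 2 + v * ξ = ξ ^ 3 / 4 + c * ξ - lam / 2 by ring,
      show ξ ^ 3 / 4 + (d - v) * ξ + lam / 2 + v * ξ = ξ ^ 3 / 4 + d * ξ + lam / 2 by ring] at e3
    rw [← e3]
    apply intervalIntegral.integral_congr
    intro σ _
    show expI (t * (σ + v * ξ)) = expI (t * σ) * expI (t * (v * ξ))
    rw [show t * (σ + v * ξ) = t * σ + t * (v * ξ) by ring, expI_add]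
  rw [e2, mul_assoc, ← expI_add, show t * (v * ξ) + x * ξ = (x + v * t) * ξ by ring, mul_comm]

set_option maxHeartbeats 1000000 in
lemma kernel_bound_main (a b c d lam v P t x : ℝ)
    (hP : 0 < P) (ha : 0 ≤ a) (hab : a ≤ b) (hcd : c ≤ d) (hlam : 0 < lam)
    (hv : v = 3 * ((a + b) / 2) ^ 2 / 4 + (c + d) / 2)
    (hbd1 : (b + a) * (d - c) ≤ 200 * lam)
    (hbd2 : b - a ≤ 2 / P)
    (hbd3 : b + a ≤ 10 * lam * P ^ 2) :
    ‖kernelK {p : ℝ × ℝ | a ≤ p.2 ∧ p.2 ≤ b ∧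
        c * p.2 ≤ p.1 - p.2 ^ 3 / 4 ∧ p.1 - p.2 ^ 3 / 4 ≤ d * p.2} lam t x‖ ≤ 1000 * lam / P ∧
      ‖kernelK {p : ℝ × ℝ | a ≤ p.2 ∧ p.2 ≤ b ∧
        c * p.2 ≤ p.1 - p.2 ^ 3 / 4 ∧ p.1 - p.2 ^ 3 / 4 ≤ d * p.2} lam t x‖ * |x + v * t| ≤
        1000 * lam := by
  have hb0 : 0 ≤ b := ha.trans hab
  have hK := kernel_formula a b c d lam v t x ha hab hcd hlam
  -- uniform bound on W
  have hCWb : ∀ ξ ∈ Set.Icc a b, ‖Wfun c d lam v t ξ‖ ≤ 201 * lam := by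
    intro ξ hξ
    refine le_trans (Wfun_norm_le c d lam v t ξ (ha.trans hξ.1) hcd hlam.le) ?_
    have h1 : (d - c) * ξ ≤ (d - c) * b := mul_le_mul_of_nonneg_left hξ.2 (sub_nonneg.2 hcd)
    nlinarith [mul_nonneg (sub_nonneg.2 hcd) ha, hlam.le]
  -- the derivative and its bound
  set W' : ℝ → ℂ := fun ξ => (3 * ξ ^ 2 / 4 + (d - v)) • expI (t * (ξ ^ 3 / 4 + (d - v) * ξ + lam / 2)) -
      (3 * ξ ^ 2 / 4 + (c - v)) • expI (t * (ξ ^ 3 / 4 + (c - v) * ξ - lam / 2)) with hW'def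
  have hW'c : Continuous W' := by
    rw [hW'def]
    exact ((by fun_prop : Continuous fun ξ : ℝ => 3 * ξ ^ 2 / 4 + (d - v)).smul
        (continuous_expI_comp (by fun_prop))).sub
      ((by fun_prop : Continuous fun ξ : ℝ => 3 * ξ ^ 2 / 4 + (c - v)).smul
        (continuous_expI_comp (by fun_prop)))
  have hCDb : ∀ ξ ∈ Set.Icc a b, ‖W' ξ‖ ≤ 2 * (3 / 4 * (b ^ 2 - a ^ 2) + (d - c) / 2) := by
    intro ξ hξ
    rw [hW'def]
    refine le_trans (norm_sub_le _ _) ?_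
    rw [norm_smul, norm_smul, norm_expI, norm_expI, mul_one, mul_one, Real.norm_eq_abs,
      Real.norm_eq_abs]
    have hξa : a ≤ ξ := hξ.1
    have hξb : ξ ≤ b := hξ.2
    have h2 : a ^ 2 ≤ ξ ^ 2 := by nlinarith
    have h3 : ξ ^ 2 ≤ b ^ 2 := by nlinarith
    have he1 : a ^ 2 ≤ ((a + b) / 2) ^ 2 := by nlinarith
    have he2 : ((a + b) / 2) ^ 2 ≤ b ^ 2 := by nlinarith
    rw [hv]
    have hA : |3 * ξ ^ 2 / 4 + (d - (3 * ((a + b) / 2) ^ 2 / 4 + (c + d) / 2))| ≤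
        3 / 4 * (b ^ 2 - a ^ 2) + (d - c) / 2 := by
      rw [abs_le]; constructor <;> linarith
    have hB : |3 * ξ ^ 2 / 4 + (c - (3 * ((a + b) / 2) ^ 2 / 4 + (c + d) / 2))| ≤
        3 / 4 * (b ^ 2 - a ^ 2) + (d - c) / 2 := by
      rw [abs_le]; constructor <;> linarith
    linarith
  constructor
  · rw [hK]
    refine le_trans (triv_bound a b (x + v * t) (201 * lam) hab (Wfun c d lam v t) hCWb) ?_
    have h5 : 201 * lam * (b - a) ≤ 201 * lam * (2 / P) :=
      mul_le_mul_of_nonneg_left hbd2 (by positivity)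
    have h6 : 201 * lam * (2 / P) ≤ 1000 * lam / P := by
      rw [div_eq_mul_inv, div_eq_mul_inv]
      nlinarith [mul_nonneg hlam.le (inv_nonneg.2 hP.le)]
    linarith
  · rcases eq_or_ne (x + v * t) 0 with h0 | h0
    · rw [h0, abs_zero, mul_zero]; positivity
    · have hibp := ibp_bound a b (x + v * t) (201 * lam)
        (2 * (3 / 4 * (b ^ 2 - a ^ 2) + (d - c) / 2)) hab h0 (Wfun c d lam v t) W'
        (fun ξ => by rw [hW'def]; exact hasDerivAt_Wfun c d lam v t ξ) hW'c hCWb hCDb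
      rw [hK]
      refine le_trans hibp ?_
      have h4 : 0 ≤ b - a := sub_nonneg.2 hab
      have hsq : (b - a) ^ 2 ≤ (2 / P) ^ 2 := pow_le_pow_left₀ h4 hbd2 2
      have hsq' : (2 / P) ^ 2 = 4 / P ^ 2 := by rw [div_pow]; norm_num
      have hterm1 : (b + a) * (b - a) ^ 2 ≤ 10 * lam * P ^ 2 * (4 / P ^ 2) := by
        apply mul_le_mul hbd3 (by rw [← hsq']; exact hsq) (sq_nonneg _) (by positivity)
      have hterm1' : 10 * lam * P ^ 2 * (4 / P ^ 2) = 40 * lam := by field_simp; ring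
      have hterm1'' : (b + a) * (b - a) ^ 2 ≤ 40 * lam := by rw [hterm1'] at hterm1; exact hterm1
      have hterm2 : (d - c) * (b - a) ≤ 200 * lam := by
        nlinarith [mul_nonneg (sub_nonneg.2 hcd) ha]
      nlinarith [hterm1'', hterm2, hlam.le]


/-- Pointwise kernel bound for enlarged curved boxes. -/
theorem kernel_pointwise_bound :
    ∃ C : ℝ, 0 < C ∧ ∀ (j k : ℤ), 1 ≤ k → ∀ a b c d : ℝ,
      0 ≤ a → a ≤ b → c ≤ d →
      (b + a) * (d - c) ≤ 200 * (k : ℝ) / 2 ^ (3 * j) →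
      b - a ≤ 2 / 2 ^ j →
      b + a ≤ 10 * (k : ℝ) / 2 ^ j →
      ∀ t x : ℝ,
        (‖kernelK {p : ℝ × ℝ | a ≤ p.2 ∧ p.2 ≤ b ∧
              c * p.2 ≤ p.1 - p.2 ^ 3 / 4 ∧ p.1 - p.2 ^ 3 / 4 ≤ d * p.2}
            ((k : ℝ) / 2 ^ (3 * j)) t x‖₊ : ℝ≥0∞) ≤
          ENNReal.ofReal (C * ((k : ℝ) / 2 ^ (3 * j))) *
            min (ENNReal.ofReal ((2 : ℝ) ^ (-j)))
              (ENNReal.ofReal |x + (3 * ((a + b) / 2) ^ 2 / 4 + (c + d) / 2) * t|)⁻¹ := by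
  refine ⟨1000, by norm_num, ?_⟩
  intro j k hk a b c d ha hab hcd h1 h2 h3 t x
  set P : ℝ := 2 ^ j with hPdef
  have hP : 0 < P := zpow_pos (by norm_num) j
  set lam : ℝ := (k : ℝ) / 2 ^ (3 * j) with hlamdef
  have hk1 : (1 : ℝ) ≤ (k : ℝ) := by exact_mod_cast hk
  have h23 : (2 : ℝ) ^ (3 * j) = P ^ 3 := by rw [mul_comm 3 j, zpow_mul, zpow_ofNat]
  have hlam : 0 < lam := by
    rw [hlamdef]
    positivity
  have h1' : (b + a) * (d - c) ≤ 200 * lam := by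
    rw [hlamdef, ← mul_div_assoc]
    exact h1
  have h3' : b + a ≤ 10 * lam * P ^ 2 := by
    have hcalc : 10 * lam * P ^ 2 = 10 * (k : ℝ) / P := by
      rw [hlamdef, h23]
      field_simp
    rw [hcalc]
    exact h3
  obtain ⟨B1, B2⟩ := kernel_bound_main a b c d lam (3 * ((a + b) / 2) ^ 2 / 4 + (c + d) / 2) P t x
    hP ha hab hcd hlam rfl h1' h2 h3'
  rw [← enorm_eq_nnnorm, ← ofReal_norm]
  have hPinv : ((2 : ℝ) ^ (-j)) = P⁻¹ := by rw [zpow_neg, hPdef]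
  rcases eq_or_ne (x + (3 * ((a + b) / 2) ^ 2 / 4 + (c + d) / 2) * t) 0 with hX | hX
  · rw [hX, abs_zero, ENNReal.ofReal_zero, ENNReal.inv_zero, min_eq_left le_top,
      ← ENNReal.ofReal_mul (by positivity)]
    apply ENNReal.ofReal_le_ofReal
    rw [hPinv, ← div_eq_mul_inv]
    exact B1
  · have habs : 0 < |x + (3 * ((a + b) / 2) ^ 2 / 4 + (c + d) / 2) * t| := abs_pos.2 hX
    rcases min_cases (ENNReal.ofReal ((2 : ℝ) ^ (-j)))
      ((ENNReal.ofReal |x + (3 * ((a + b) / 2) ^ 2 / 4 + (c + d) / 2) * t|)⁻¹) with ⟨hm, _⟩ | ⟨hm, _⟩ <;>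
      rw [hm]
    · rw [← ENNReal.ofReal_mul (by positivity)]
      apply ENNReal.ofReal_le_ofReal
      rw [hPinv, ← div_eq_mul_inv]
      exact B1
    · rw [← ENNReal.ofReal_inv_of_pos habs, ← ENNReal.ofReal_mul (by positivity)]
      apply ENNReal.ofReal_le_ofReal
      rw [← div_eq_mul_inv]
      exact (le_div_iff₀ habs).2 B2
end
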